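/- Let m ≥ 1, let B⁽⁰⁾, …, B⁽ᵐ⁻¹⁾ be N×N real matrices and ψ⁽⁰⁾, …, ψ⁽ᵐ⁻¹⁾ ∈ ℝ^N, and let v⁽⁰⁾ ∈ ℝ^N with the recursion v⁽ᵏ⁺¹⁾ = B⁽ᵏ⁾v⁽ᵏ⁾/(1 + ψ⁽ᵏ⁾ᵀv⁽ᵏ⁾), where 1 + ψ⁽ᵏ⁾ᵀv⁽ᵏ⁾ > 0 for every k < m. Suppose the cycle closes: v⁽ᵐ⁾ = v⁽⁰⁾. Define the step times t_k = log(1 + ψ⁽ᵏ⁾ᵀv⁽ᵏ⁾) and λ = 1 + ψ^{(m,0)ᵀ}v⁽⁰⁾ where ψ^{(m,0)} = ψ⁽⁰⁾ + Σ_{k=1}^{m−1} (B⁽ᵏ⁻¹⁾⋯B⁽⁰⁾)ᵀ ψ⁽ᵏ⁾. Then B⁽ᵐ⁻¹⁾⋯B⁽⁰⁾ v⁽⁰⁾ = λ v⁽⁰⁾ and the total traversal time satisfies Σ_{k=0}^{m−1} t_k = log λ; i.e., the period of the periodic orbit equals the logarithm of the eigenvalue of the cycle-map matrix corresponding to the fixed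 point. -/

import Mathlib

open Matrix

/-- If the fractional-linear wall-to-wall maps of a Glass network
close up into a cycle (`v⁽ᵐ⁾ = v⁽⁰⁾`) with positive denominators, then `v⁽⁰⁾` is an
eigenvector of the cycle-map matrix `B⁽ᵐ⁻¹⁾⋯B⁽⁰⁾` with eigenvalue
`λ = 1 + ψ^{(m,0)ᵀ}v⁽⁰⁾`, and the total traversal time (the period of the periodic
orbit) equals `log λ`. -/
theorem stmt8 (N m : ℕ) (hm : 1 ≤ m)
    (B : ℕ → Matrix (Fin N) (Fin N) ℝ) (ψ : ℕ → Fin N → ℝ)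
    (v : ℕ → Fin N → ℝ)
    (hden : ∀ k < m, 0 < 1 + ψ k ⬝ᵥ v k)
    (hrec : ∀ k < m, v (k+1) = (1 + ψ k ⬝ᵥ v k)⁻¹ • (B k).mulVec (v k))
    (hclose : v m = v 0)
    (t : ℕ → ℝ) (ht : ∀ k, t k = Real.log (1 + ψ k ⬝ᵥ v k))
    (lam : ℝ)
    (hlam : lam = 1 + (ψ 0 + ∑ k ∈ Finset.Ico 1 m,
      (((List.range k).reverse.map B).prod)ᵀ.mulVec (ψ k)) ⬝ᵥ v 0) :
    (((List.range m).reverse.map B).prod).mulVec (v 0) = lam • v 0 ∧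
    ∑ k ∈ Finset.range m, t k = Real.log lam := by
  set D : ℕ → ℝ := fun k => ∏ j ∈ Finset.range k, (1 + ψ j ⬝ᵥ v j) with hD
  -- product expansion
  have hmain : ∀ k, k ≤ m →
      (((List.range k).reverse.map B).prod).mulVec (v 0) = D k • v k := by
    intro k hk
    induction k with
    | zero => simp [hD]
    | succ n ih =>
      have hn : n < m := hk
      have ihn := ih (le_of_lt hn)
      have hsplit : (List.range (n+1)).reverse = n :: (List.range n).reverse := by
        rw [List.range_succ, List.reverse_append]; rfl
      rw [hsplit]
      have hdpos := hden n hn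
      have hdne : (1 + ψ n ⬝ᵥ v n) ≠ 0 := ne_of_gt hdpos
      have hBv : (B n).mulVec (v n) = (1 + ψ n ⬝ᵥ v n) • v (n+1) := by
        rw [hrec n hn, smul_smul, mul_inv_cancel₀ hdne, one_smul]
      simp only [List.map_cons, List.prod_cons]
      rw [← Matrix.mulVec_mulVec, ihn, Matrix.mulVec_smul, hBv, smul_smul]
      have : D (n+1) = D n * (1 + ψ n ⬝ᵥ v n) := by
        rw [hD]; exact Finset.prod_range_succ _ n
      rw [this]
  have hDpos : ∀ k, k ≤ m → 0 < D k := by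
    intro k hk
    apply Finset.prod_pos
    intro j hj
    exact hden j (lt_of_lt_of_le (Finset.mem_range.mp hj) hk)
  -- lam = D m
  have hlamD : lam = D m := by
    have hterm : ∀ k ∈ Finset.Ico 1 m,
        (((List.range k).reverse.map B).prod)ᵀ.mulVec (ψ k) ⬝ᵥ v 0
          = D k * (ψ k ⬝ᵥ v k) := by
      intro k hk
      obtain ⟨hk1, hk2⟩ := Finset.mem_Ico.mp hk
      rw [Matrix.mulVec_transpose, ← Matrix.dotProduct_mulVec,
        hmain k (le_of_lt hk2), dotProduct_smul, smul_eq_mul]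
    have htele : ∀ n, n ≤ m → D n = 1 + ∑ k ∈ Finset.range n, D k * (ψ k ⬝ᵥ v k) := by
      intro n hn
      induction n with
      | zero => simp [hD]
      | succ p ih =>
        have hp : p < m := hn
        rw [Finset.sum_range_succ, ← add_assoc, ← ih (le_of_lt hp)]
        have hstep : D (p+1) = D p * (1 + ψ p ⬝ᵥ v p) := by
          rw [hD]; exact Finset.prod_range_succ _ p
        rw [hstep]; ring
    have hsum : ∀ (s : Finset ℕ) (f : ℕ → Fin N → ℝ) (w : Fin N → ℝ),
        (∑ k ∈ s, f k) ⬝ᵥ w = ∑ k ∈ s, f k ⬝ᵥ w := by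
      intro s f w
      induction s using Finset.cons_induction with
      | empty => simp
      | cons a s ha ih => rw [Finset.sum_cons, Finset.sum_cons, add_dotProduct, ih]
    rw [hlam, add_dotProduct, hsum]
    rw [Finset.sum_congr rfl hterm, htele m le_rfl]
    congr 1
    rw [Finset.range_eq_Ico, Finset.sum_eq_sum_Ico_succ_bot (by omega : 0 < m)]
    have h0 : D 0 = 1 := by simp [hD]
    rw [h0, one_mul]
  constructor
  · rw [hmain m le_rfl, hclose, hlamD]
  · rw [hlamD, hD]
    rw [Real.log_prod (fun j hj => ne_of_gt (hden j (Finset.mem_range.mp hj)))]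
    exact Finset.sum_congr rfl fun k hk => ht k
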